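/- Let F : X ⇒ Y be a set-valued mapping between real vector spaces whose graph gph(F) := {(x, y) : y ∈ F(x)} is convex and core-solid. Then core(gph(F)) = {(x, y) ∈ X × Y : x ∈ core(dom(F)) and y ∈ core(F(x))}, where dom(F) := {x : F(x) ≠ ∅}. -/

import Mathlib

open Pointwise Set

/-- Algebraic core (algebraic interior) of a set in a real vector space. -/
def algCore {X : Type*} [AddCommGroup X] [Module ℝ X] (Ω : Set X) : Set X :=
  {x | x ∈ Ω ∧ ∀ v : X, ∃ δ : ℝ, 0 < δ ∧ ∀ t : ℝ, |t| < δ → x + t • v ∈ Ω}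

/-- Normal cone to a convex set `Ω` at `xbar`, consisting of linear functionals. -/
def normalCone {X : Type*} [AddCommGroup X] [Module ℝ X] (xbar : X) (Ω : Set X) :
    Set (X →ₗ[ℝ] ℝ) :=
  {f | ∀ x ∈ Ω, f (x - xbar) ≤ 0}

/-- Extremal system of two sets in a vector space. -/
def IsExtremal {X : Type*} [AddCommGroup X] [Module ℝ X] (Ω₁ Ω₂ : Set X) : Prop :=
  ∃ x₀ : X, ∀ δ : ℝ, 0 < δ → ∃ t₀ : ℝ, |t₀| < δ ∧
    ((fun w => w + t₀ • x₀) '' Ω₁) ∩ Ω₂ = ∅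

/-- Domain of a set-valued mapping. -/
def svDom {X Y : Type*} (F : X → Set Y) : Set X := {x | (F x).Nonempty}

/-- Graph of a set-valued mapping. -/
def svGraph {X Y : Type*} (F : X → Set Y) : Set (X × Y) := {p | p.2 ∈ F p.1}

/-- Coderivative of a set-valued mapping `F` at `(xbar, ybar) ∈ gph F` applied to a linear
functional `g`: the set of linear `f` with `(f, -g)` in the normal cone to the graph. -/
def coderiv {X Y : Type*} [AddCommGroup X] [Module ℝ X] [AddCommGroup Y] [Module ℝ Y]
    (F : X → Set Y) (xbar : X) (ybar : Y) (g : Y →ₗ[ℝ] ℝ) : Set (X →ₗ[ℝ] ℝ) :=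
  {f | ∀ x : X, ∀ y ∈ F x, f (x - xbar) - g (y - ybar) ≤ 0}

/-- Subdifferential (of linear functionals) of an extended-real-valued function. -/
def subdiff {X : Type*} [AddCommGroup X] [Module ℝ X] (φ : X → EReal) (xbar : X) :
    Set (X →ₗ[ℝ] ℝ) :=
  {f | ∀ x : X, φ xbar + (f (x - xbar) : EReal) ≤ φ x}

/-- Effective domain of an extended-real-valued function with values in `ℝ ∪ {+∞}`. -/
def fDom {X : Type*} (φ : X → EReal) : Set X := {x | φ x < ⊤}

/-- Epigraph of an extended-real-valued function. -/
def epi {X : Type*} (φ : X → EReal) : Set (X × ℝ) := {p | φ p.1 ≤ (p.2 : EReal)}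

/-- Convexity of an extended-real-valued function (with values in `ℝ ∪ {+∞}`). -/
def ConvexFun {X : Type*} [AddCommGroup X] [Module ℝ X] (φ : X → EReal) : Prop :=
  ∀ x y : X, ∀ t : ℝ, 0 ≤ t → t ≤ 1 →
    φ (t • x + (1 - t) • y) ≤ (t : EReal) * φ x + ((1 - t : ℝ) : EReal) * φ y

/-- Composition of set-valued mappings. -/
def svComp {X Y Z : Type*} (G : Y → Set Z) (F : X → Set Y) : X → Set Z :=
  fun x => ⋃ y ∈ F x, G y

/-- The linear functional on `X × Y` identified with a pair `(f, g)` of linear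
functionals on `X` and `Y`. -/
def pairFun {X Y : Type*} [AddCommGroup X] [Module ℝ X] [AddCommGroup Y] [Module ℝ Y]
    (f : X →ₗ[ℝ] ℝ) (g : Y →ₗ[ℝ] ℝ) : X × Y →ₗ[ℝ] ℝ :=
  f ∘ₗ LinearMap.fst ℝ X Y + g ∘ₗ LinearMap.snd ℝ X Y

/-- Segment from a point of a convex set to a core point lies in the core. -/
lemma algCore_segment {Z : Type*} [AddCommGroup Z] [Module ℝ Z] {Ω : Set Z}
    (hconv : Convex ℝ Ω) {c q : Z} (hc : c ∈ algCore Ω) (hq : q ∈ Ω)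
    {t : ℝ} (ht : 0 < t) (ht1 : t ≤ 1) : (1 - t) • q + t • c ∈ algCore Ω := by
  constructor
  · exact hconv hq hc.1 (by linarith) ht.le (by ring)
  · intro v
    obtain ⟨δ, hδ, hmem⟩ := hc.2 v
    refine ⟨t * δ, by positivity, fun s hs => ?_⟩
    have h1 : c + (s / t) • v ∈ Ω := by
      apply hmem
      rw [abs_div, abs_of_pos ht, div_lt_iff₀ ht]
      linarith [hs]
    have heq : (1 - t) • q + t • c + s • v = (1 - t) • q + t • (c + (s / t) • v) := by
      have : t * (s / t) = s := by field_simp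
      rw [smul_add, smul_smul, this]
      abel
    rw [heq]
    exact hconv hq h1 (by linarith) ht.le (by ring)

/-- core of a core-solid convex graph of a set-valued mapping. -/
theorem core_of_graph {X Y : Type*} [AddCommGroup X] [Module ℝ X]
    [AddCommGroup Y] [Module ℝ Y] (F : X → Set Y)
    (hconv : Convex ℝ (svGraph F)) (hsolid : (algCore (svGraph F)).Nonempty) :
    algCore (svGraph F) =
      {p : X × Y | p.1 ∈ algCore (svDom F) ∧ p.2 ∈ algCore (F p.1)} := by
  ext ⟨x, y⟩
  constructor
  · rintro ⟨hxy, hcore⟩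
    refine ⟨⟨⟨y, hxy⟩, fun v => ?_⟩, hxy, fun w => ?_⟩
    · obtain ⟨δ, hδ, h⟩ := hcore (v, 0)
      refine ⟨δ, hδ, fun t ht => ⟨y, ?_⟩⟩
      have := h t ht
      simpa [svGraph, Prod.smul_def] using this
    · obtain ⟨δ, hδ, h⟩ := hcore ((0 : X), w)
      refine ⟨δ, hδ, fun t ht => ?_⟩
      have := h t ht
      simpa [svGraph, Prod.smul_def] using this
  · rintro ⟨⟨hxdom, hxcore⟩, hyFx, hycore⟩
    obtain ⟨c, hc⟩ := hsolid
    -- Step 1: push x beyond itself in the direction away from c.1, staying in the domain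
    obtain ⟨δ, hδ, h⟩ := hxcore (x - c.1)
    set t : ℝ := δ / 2 with htdef
    have ht : 0 < t := by positivity
    have hx' : x + t • (x - c.1) ∈ svDom F := h t (by rw [abs_of_pos ht]; simp [htdef]; linarith)
    obtain ⟨y', hy'⟩ := hx'
    have h1t : (0 : ℝ) < 1 + t := by linarith
    -- Step 2: the point (x, ỹ) is in the core of the graph
    set s : ℝ := t / (1 + t) with hsdef
    have hs : 0 < s := by positivity
    have hs1 : s ≤ 1 := by rw [hsdef, div_le_one h1t]; linarith
    set ytil : Y := (1 - s) • y' + s • c.2 with hytil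
    have hq : ((x + t • (x - c.1), y') : X × Y) ∈ svGraph F := hy'
    have key : ((x, ytil) : X × Y) ∈ algCore (svGraph F) := by
      have hseg := algCore_segment hconv hc hq hs hs1
      have heq : (1 - s) • ((x + t • (x - c.1), y') : X × Y) + s • c = (x, ytil) := by
        have h1 : (1 - s) • (x + t • (x - c.1)) + s • c.1 = x := by
          have hns : (1 - s) = 1 / (1 + t) := by
            rw [hsdef]; field_simp; ring
          rw [hns, hsdef]
          match_scalars <;> · field_simp; try ring
        exact Prod.ext (by simpa using h1) rfl
      rwa [heq] at hseg
    have hytilF : ytil ∈ F x := key.1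
    -- Step 3: push y beyond itself in the direction away from ỹ, staying in F x
    obtain ⟨δ₂, hδ₂, h₂⟩ := hycore (y - ytil)
    set τ : ℝ := δ₂ / 2 with hτdef
    have hτ : 0 < τ := by positivity
    have hy'' : y + τ • (y - ytil) ∈ F x := h₂ τ (by rw [abs_of_pos hτ]; simp [hτdef]; linarith)
    have h1τ : (0 : ℝ) < 1 + τ := by linarith
    set σ : ℝ := τ / (1 + τ) with hσdef
    have hσ : 0 < σ := by positivity
    have hσ1 : σ ≤ 1 := by rw [hσdef, div_le_one h1τ]; linarith
    have hq2 : ((x, y + τ • (y - ytil)) : X × Y) ∈ svGraph F := hy''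
    have hseg2 := algCore_segment hconv key hq2 hσ hσ1
    have heq2 : (1 - σ) • ((x, y + τ • (y - ytil)) : X × Y) + σ • ((x, ytil) : X × Y)
        = (x, y) := by
      have hnσ : (1 - σ) = 1 / (1 + τ) := by rw [hσdef]; field_simp; ring
      refine Prod.ext ?_ ?_
      · show (1 - σ) • x + σ • x = x
        rw [← add_smul]; simp
      · show (1 - σ) • (y + τ • (y - ytil)) + σ • ytil = y
        rw [hnσ, hσdef]
        match_scalars <;> · field_simp; try ring
    rwa [heq2] at hseg2
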